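/- arXiv:2306.04981 — 2 statements merged into one kernel-verified Lean document; each statement's English description precedes it below -/
import Mathlib

section
/- (Feasible contraction decreases the objective.) Suppose a generalized feasible contraction via functions h_k: U → U' (over a strictly separated partition V = ∪_k V_k, W = ∪_k W_k) transforms a feasible weight p(u|v) on the bipartite graph G[V,U] into p'(u'|v) = Σ_{u∈E_v: h_k(u)=u'} p(u|v) for v ∈ V_k. Then (i) p' is again a feasible weight (it is a conditional distribution supported on E' and satisfies Loss(p') ≤ Loss(p)), and (ii) the objective does not increase: GD_{E'}(p'||p') ≤ GD_E(p||p), i.e., I(U';V) − I(U';W) ≤ I(U;V) − I(U;W). -/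
open Real

noncomputable section

variable {V U W : Type*} [Fintype V] [Fintype U] [Fintype W]
  [DecidableEq V] [DecidableEq U]

/-- `q(u|v)` is a conditional distribution supported on the edge set `E`. -/
def CondDistOn (E : Finset (V × U)) (q : V → U → ℝ) : Prop :=
  (∀ v u, 0 ≤ q v u) ∧ (∀ v, ∑ u, q v u = 1) ∧ (∀ v u, q v u ≠ 0 → (v, u) ∈ E)

/-- Generalized K-L divergence `GD_E(q‖r)`. -/
def GDE (E : Finset (V × U)) (p : V → ℝ) (pw : V → U → W → ℝ)
    (q : V → U → ℝ) (r : W → U → ℝ) : ℝ :=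
  ∑ v, ∑ u, ∑ w, if (v, u) ∈ E then p v * q v u * pw v u w * Real.log (q v u / r w u) else 0

/-- Expected loss `Loss(q) = Σ p(v) q(u|v) ℓ̃(v,u)`. -/
def LossE (E : Finset (V × U)) (p : V → ℝ) (lt : V → U → ℝ) (q : V → U → ℝ) : ℝ :=
  ∑ v, ∑ u, if (v, u) ∈ E then p v * q v u * lt v u else 0

/-- The joint distribution `p(v,u,w) = p(v) q(u|v) p(w|u,v)`. -/
def jointD (E : Finset (V × U)) (p : V → ℝ) (pw : V → U → W → ℝ) (q : V → U → ℝ)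
    (v : V) (u : U) (w : W) : ℝ :=
  if (v, u) ∈ E then p v * q v u * pw v u w else 0

/-- Marginal `p(u)`. -/
def margU (p : V → ℝ) (q : V → U → ℝ) (u : U) : ℝ := ∑ v, p v * q v u

/-- Marginal `p(u,w)`. -/
def margUW (E : Finset (V × U)) (p : V → ℝ) (pw : V → U → W → ℝ) (q : V → U → ℝ)
    (u : U) (w : W) : ℝ := ∑ v, jointD E p pw q v u w

/-- Marginal `p(w)`. -/
def margW (E : Finset (V × U)) (p : V → ℝ) (pw : V → U → W → ℝ) (q : V → U → ℝ)
    (w : W) : ℝ := ∑ u, margUW E p pw q u w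

/-- Mutual information `I(U;V)`. -/
def IUV (p : V → ℝ) (q : V → U → ℝ) : ℝ :=
  ∑ v, ∑ u, p v * q v u * Real.log (q v u / margU p q u)

/-- Mutual information `I(U;W)`. -/
def IUW (E : Finset (V × U)) (p : V → ℝ) (pw : V → U → W → ℝ) (q : V → U → ℝ) : ℝ :=
  ∑ u, ∑ w, margUW E p pw q u w *
    Real.log (margUW E p pw q u w / (margU p q u * margW E p pw q w))

/-- Objective `I(U;V) - I(U;W)`. -/
def Obj (E : Finset (V × U)) (p : V → ℝ) (pw : V → U → W → ℝ) (q : V → U → ℝ) : ℝ :=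
  IUV p q - IUW E p pw q

/-- The induced conditional distribution `r*(q)(u|w)`. -/
def rstar (E : Finset (V × U)) (p : V → ℝ) (pw : V → U → W → ℝ) (q : V → U → ℝ)
    (w : W) (u : U) : ℝ := margUW E p pw q u w / margW E p pw q w

/-- Gibbs update `q_s^*(r)(u|v)`. -/
def qstar (E : Finset (V × U)) (pw : V → U → W → ℝ) (lt : V → U → ℝ)
    (s : ℝ) (r : W → U → ℝ) (v : V) (u : U) : ℝ :=
  (if (v, u) ∈ E then Real.exp (-s * lt v u) * ∏ w', r w' u ^ pw v u w' else 0) /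
  (∑ u', if (v, u') ∈ E then Real.exp (-s * lt v u') * ∏ w', r w' u' ^ pw v u' w' else 0)

/-- The penalty (Lagrangian) function `F_s(q,r)`. -/
def FPen (E : Finset (V × U)) (p : V → ℝ) (pw : V → U → W → ℝ) (lt : V → U → ℝ)
    (s : ℝ) (q : V → U → ℝ) (r : W → U → ℝ) : ℝ :=
  GDE E p pw q r + s * LossE E p lt q

/-- Generalized K-L divergence between two conditional distributions on `E`. -/
def GDcond (E : Finset (V × U)) (p : V → ℝ) (q1 q2 : V → U → ℝ) : ℝ :=
  ∑ v, ∑ u, if (v, u) ∈ E then p v * q1 v u * Real.log (q1 v u / q2 v u) else 0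

/-- Conditional K-L divergence `GD_q(r1‖r2)` weighted by `q(w)`. -/
def GDr (E : Finset (V × U)) (p : V → ℝ) (pw : V → U → W → ℝ) (q : V → U → ℝ)
    (r1 r2 : W → U → ℝ) : ℝ :=
  ∑ u, ∑ w, margW E p pw q w * r1 w u * Real.log (r1 w u / r2 w u)

/-- The target-loss function `T(L)` (valued in `EReal`, `+∞` if infeasible). -/
def TL (E : Finset (V × U)) (p : V → ℝ) (pw : V → U → W → ℝ) (lt : V → U → ℝ)
    (L : ℝ) : EReal :=
  sInf {x : EReal | ∃ q, CondDistOn E q ∧ LossE E p lt q ≤ L ∧ x = (Obj E p pw q : EReal)}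


lemma log_sum_ineq {α : Type*} (s : Finset α) (a b : α → ℝ)
    (ha : ∀ i ∈ s, 0 ≤ a i) (hb : ∀ i ∈ s, 0 ≤ b i)
    (hab : ∀ i ∈ s, a i ≠ 0 → b i ≠ 0) :
    (∑ i ∈ s, a i) * Real.log ((∑ i ∈ s, a i) / (∑ i ∈ s, b i))
      ≤ ∑ i ∈ s, a i * Real.log (a i / b i) := by
  set A := ∑ i ∈ s, a i with hA
  set B := ∑ i ∈ s, b i with hB
  have hA0 : 0 ≤ A := Finset.sum_nonneg ha
  have hB0 : 0 ≤ B := Finset.sum_nonneg hb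
  by_cases hBz : B = 0
  · have hb0 : ∀ i ∈ s, b i = 0 := (Finset.sum_eq_zero_iff_of_nonneg hb).1 hBz
    have ha0 : ∀ i ∈ s, a i = 0 := fun i hi => by
      by_contra hne; exact hab i hi hne (hb0 i hi)
    have hAz : A = 0 := Finset.sum_eq_zero ha0
    rw [hAz, zero_mul]
    exact Finset.sum_nonneg fun i hi => by rw [ha0 i hi, zero_mul]
  · have hBpos : 0 < B := lt_of_le_of_ne hB0 (Ne.symm hBz)
    have key : ∀ i ∈ s, a i * Real.log (A / B) - a i * Real.log (a i / b i)
        ≤ A * b i / B - a i := by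
      intro i hi
      by_cases hai : a i = 0
      · rw [hai]
        simp only [zero_mul, sub_zero, sub_self]
        have : 0 ≤ A * b i / B := div_nonneg (mul_nonneg hA0 (hb i hi)) hB0
        linarith
      · have hapos : 0 < a i := lt_of_le_of_ne (ha i hi) (Ne.symm hai)
        have hbpos : 0 < b i := lt_of_le_of_ne (hb i hi) (Ne.symm (hab i hi hai))
        have hApos : 0 < A := lt_of_lt_of_le hapos (Finset.single_le_sum ha hi)
        have h1 : Real.log (A / B) - Real.log (a i / b i)
            = Real.log ((A / B) / (a i / b i)) := by
          rw [Real.log_div (by positivity : (0:ℝ) < A / B).ne'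
            (by positivity : (0:ℝ) < a i / b i).ne']
        have h2 : Real.log ((A / B) / (a i / b i)) ≤ (A / B) / (a i / b i) - 1 :=
          Real.log_le_sub_one_of_pos (by positivity)
        have h4 : a i * (Real.log (A / B) - Real.log (a i / b i))
            ≤ a i * ((A / B) / (a i / b i) - 1) := by
          rw [h1]; exact mul_le_mul_of_nonneg_left h2 hapos.le
        have h3 : a i * ((A / B) / (a i / b i) - 1) = A * b i / B - a i := by
          field_simp
        rw [mul_sub] at h4
        linarith [h3 ▸ h4]
    have hsum := Finset.sum_le_sum key
    rw [Finset.sum_sub_distrib, ← Finset.sum_mul] at hsum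
    have hz : ∑ i ∈ s, (A * b i / B - a i) = 0 := by
      rw [Finset.sum_sub_distrib]
      have : ∑ i ∈ s, A * b i / B = A := by
        rw [← Finset.sum_div, ← Finset.mul_sum, ← hB, mul_div_assoc, div_self hBz, mul_one]
      rw [this, ← hA, sub_self]
    rw [hz] at hsum
    linarith

lemma jointD_nonneg (E : Finset (V × U)) (p : V → ℝ) (hp : ∀ v, 0 ≤ p v)
    (pw : V → U → W → ℝ) (hpw0 : ∀ v u w, 0 ≤ pw v u w)
    (q : V → U → ℝ) (hq0 : ∀ v u, 0 ≤ q v u) (v : V) (u : U) (w : W) :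
    0 ≤ jointD E p pw q v u w := by
  rw [jointD]
  split
  · exact mul_nonneg (mul_nonneg (hp v) (hq0 v u)) (hpw0 v u w)
  · exact le_refl 0

lemma obj_eq_S (E : Finset (V × U)) (p : V → ℝ) (hp : ∀ v, 0 < p v)
    (pw : V → U → W → ℝ) (hpw0 : ∀ v u w, 0 ≤ pw v u w)
    (hpw1 : ∀ v u, (v, u) ∈ E → ∑ w, pw v u w = 1)
    (q : V → U → ℝ) (hq : CondDistOn E q) :
    Obj E p pw q = ∑ v, ∑ u, ∑ w, jointD E p pw q v u w *
      Real.log (q v u * margW E p pw q w / margUW E p pw q u w) := by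
  obtain ⟨hq0, hq1, hqE⟩ := hq
  have hqz : ∀ v u, (v, u) ∉ E → q v u = 0 := fun v u hh => by
    by_contra hne; exact hh (hqE v u hne)
  have hJnn : ∀ v u w, 0 ≤ jointD E p pw q v u w :=
    jointD_nonneg E p (fun v => (hp v).le) pw hpw0 q hq0
  have hUWnn : ∀ u w, 0 ≤ margUW E p pw q u w :=
    fun u w => Finset.sum_nonneg fun v _ => hJnn v u w
  have hsumJ : ∀ v u, ∑ w, jointD E p pw q v u w = p v * q v u := by
    intro v u
    by_cases hE : (v, u) ∈ E
    · simp only [jointD, if_pos hE]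
      rw [← Finset.mul_sum, hpw1 v u hE, mul_one]
    · simp [jointD, hE, hqz v u hE]
  have hIUV : IUV p q = ∑ v, ∑ u, ∑ w, jointD E p pw q v u w *
      Real.log (q v u / margU p q u) := by
    unfold IUV
    refine Finset.sum_congr rfl fun v _ => Finset.sum_congr rfl fun u _ => ?_
    rw [← Finset.sum_mul, hsumJ]
  have hIUW : IUW E p pw q = ∑ v, ∑ u, ∑ w, jointD E p pw q v u w *
      Real.log (margUW E p pw q u w / (margU p q u * margW E p pw q w)) := by
    unfold IUW
    have step0 : ∀ u w, margUW E p pw q u w *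
        Real.log (margUW E p pw q u w / (margU p q u * margW E p pw q w))
        = ∑ v, jointD E p pw q v u w *
          Real.log (margUW E p pw q u w / (margU p q u * margW E p pw q w)) := by
      intro u w
      rw [margUW, Finset.sum_mul]
    simp only [step0]
    have step1 : ∀ u : U, (∑ w, ∑ v, jointD E p pw q v u w *
        Real.log (margUW E p pw q u w / (margU p q u * margW E p pw q w)))
        = ∑ v, ∑ w, jointD E p pw q v u w *
          Real.log (margUW E p pw q u w / (margU p q u * margW E p pw q w)) :=
      fun u => Finset.sum_comm 
    simp only [step1]
    exact Finset.sum_comm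
  unfold Obj
  rw [hIUV, hIUW, ← Finset.sum_sub_distrib]
  refine Finset.sum_congr rfl fun v _ => ?_
  rw [← Finset.sum_sub_distrib]
  refine Finset.sum_congr rfl fun u _ => ?_
  rw [← Finset.sum_sub_distrib]
  refine Finset.sum_congr rfl fun w _ => ?_
  rw [← mul_sub]
  by_cases hJ : jointD E p pw q v u w = 0
  · rw [hJ, zero_mul, zero_mul]
  · have hE : (v, u) ∈ E := by
      by_contra hh; exact hJ (by simp [jointD, hh])
    have hJe : jointD E p pw q v u w = p v * q v u * pw v u w := by
      simp [jointD, hE]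
    have hqne : q v u ≠ 0 := fun h0 => hJ (by rw [hJe, h0]; ring)
    have hqpos : 0 < q v u := lt_of_le_of_ne (hq0 v u) (Ne.symm hqne)
    have hpwne : pw v u w ≠ 0 := fun h0 => hJ (by rw [hJe, h0]; ring)
    have hpwpos : 0 < pw v u w := lt_of_le_of_ne (hpw0 v u w) (Ne.symm hpwne)
    have hJpos : 0 < jointD E p pw q v u w := by
      rw [hJe]; exact mul_pos (mul_pos (hp v) hqpos) hpwpos
    have hUpos : 0 < margU p q u :=
      lt_of_lt_of_le (mul_pos (hp v) hqpos)
        (Finset.single_le_sum (fun v' _ => mul_nonneg (hp v').le (hq0 v' u))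
          (Finset.mem_univ v))
    have hUWpos : 0 < margUW E p pw q u w :=
      lt_of_lt_of_le hJpos
        (Finset.single_le_sum (fun v' _ => hJnn v' u w) (Finset.mem_univ v))
    have hWpos : 0 < margW E p pw q w :=
      lt_of_lt_of_le hUWpos
        (Finset.single_le_sum (fun u' _ => hUWnn u' w) (Finset.mem_univ u))
    congr 1
    rw [Real.log_div hqpos.ne' hUpos.ne',
      Real.log_div hUWpos.ne' (mul_pos hUpos hWpos).ne',
      Real.log_mul hUpos.ne' hWpos.ne',
      Real.log_div (mul_pos hqpos hWpos).ne' hUWpos.ne',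
      Real.log_mul hqpos.ne' hWpos.ne']
    ring

/-- a generalized feasible contraction produces a feasible weight and
does not increase the loss nor the objective `I(U;V) − I(U;W)`. -/
theorem feasible_contraction
    {K : Type*} [Fintype K]
    (E E' : Finset (V × U)) (hE : ∀ v : V, ∃ u, (v, u) ∈ E) (hsub : E' ⊆ E)
    (p : V → ℝ) (hp : ∀ v, 0 < p v) (hp1 : ∑ v, p v = 1)
    (pw : V → U → W → ℝ) (hpw0 : ∀ v u w, 0 ≤ pw v u w)
    (hpw1 : ∀ v u, (v, u) ∈ E → ∑ w, pw v u w = 1)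
    (lt : V → U → ℝ) (hlt : ∀ v u, 0 ≤ lt v u)
    -- the partitions, encoded by index maps
    (kV : V → K) (kW : W → K)
    -- strict separation condition
    (hsep : ∀ v w, (∃ u, (v, u) ∈ E ∧ 0 < pw v u w) → kV v = kW w)
    -- the contraction maps
    (h : K → U → U)
    (hhE : ∀ k v u, (v, u) ∈ E → (v, h k u) ∈ E')
    (hhl : ∀ v u, (v, u) ∈ E → lt v (h (kV v) u) ≤ lt v u)
    (hhp : ∀ v u w, (v, u) ∈ E → kW w = kV v → pw v (h (kV v) u) w = pw v u w)
    -- a feasible weight and its contraction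
    (q : V → U → ℝ) (hq : CondDistOn E q) (L : ℝ) (hqL : LossE E p lt q ≤ L)
    (q' : V → U → ℝ)
    (hq' : ∀ v u', q' v u'
      = ∑ u, if (v, u) ∈ E ∧ h (kV v) u = u' then q v u else 0) :
    CondDistOn E' q'
      ∧ LossE E' p lt q' ≤ LossE E p lt q
      ∧ LossE E' p lt q' ≤ L
      ∧ Obj E' p pw q' ≤ Obj E p pw q := by
  obtain ⟨hq0, hq1, hqE⟩ := hq
  have hqz : ∀ v u, (v, u) ∉ E → q v u = 0 := fun v u hh => by
    by_contra hne; exact hh (hqE v u hne)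
  -- (i) q' is a conditional distribution on E'
  have hq'0 : ∀ v u', 0 ≤ q' v u' := by
    intro v u'; rw [hq']
    refine Finset.sum_nonneg fun u _ => ?_
    split
    · exact hq0 v u
    · exact le_refl 0
  have hq'E : ∀ v u', q' v u' ≠ 0 → (v, u') ∈ E' := by
    intro v u' hne
    rw [hq'] at hne
    obtain ⟨u, _, hu⟩ := Finset.exists_ne_zero_of_sum_ne_zero hne
    by_cases hc : (v, u) ∈ E ∧ h (kV v) u = u'
    · exact hc.2 ▸ hhE (kV v) v u hc.1
    · rw [if_neg hc] at hu; exact absurd rfl hu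
  have hq'1 : ∀ v, ∑ u', q' v u' = 1 := by
    intro v
    simp only [hq']
    rw [Finset.sum_comm, ← hq1 v]
    refine Finset.sum_congr rfl fun u _ => ?_
    by_cases hEv : (v, u) ∈ E
    · simp [hEv]
    · simp [hEv, hqz v u hEv]
  have hcd' : CondDistOn E' q' := ⟨hq'0, hq'1, hq'E⟩
  -- loss inequality
  have hLq : ∀ v u', (if (v, u') ∈ E' then p v * q' v u' * lt v u' else 0)
      = ∑ u, if (v, u) ∈ E ∧ h (kV v) u = u' then p v * q v u * lt v u' else 0 := by
    intro v u'
    by_cases hE' : (v, u') ∈ E'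
    · rw [if_pos hE', hq', Finset.mul_sum, Finset.sum_mul]
      refine Finset.sum_congr rfl fun u _ => ?_
      split_ifs with hc
      · ring
      · ring
    · rw [if_neg hE']
      symm
      refine Finset.sum_eq_zero fun u _ => ?_
      rw [if_neg]
      rintro ⟨hEv, hhv⟩
      exact hE' (hhv ▸ hhE (kV v) v u hEv)
  have hLoss : LossE E' p lt q' ≤ LossE E p lt q := by
    unfold LossE
    calc ∑ v, ∑ u', (if (v, u') ∈ E' then p v * q' v u' * lt v u' else 0)
        = ∑ v, ∑ u, ∑ u', if (v, u) ∈ E ∧ h (kV v) u = u'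
            then p v * q v u * lt v u' else 0 := by
          refine Finset.sum_congr rfl fun v _ => ?_
          rw [Finset.sum_congr rfl fun u' _ => hLq v u']
          exact Finset.sum_comm
      _ ≤ ∑ v, ∑ u, (if (v, u) ∈ E then p v * q v u * lt v u else 0) := by
          refine Finset.sum_le_sum fun v _ => Finset.sum_le_sum fun u _ => ?_
          have hrw : (∑ u', if (v, u) ∈ E ∧ h (kV v) u = u'
              then p v * q v u * lt v u' else 0)
              = if (v, u) ∈ E then p v * q v u * lt v (h (kV v) u) else 0 := by
            by_cases hEv : (v, u) ∈ E
            · simp [hEv]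
            · simp [hEv]
          rw [hrw]
          by_cases hEv : (v, u) ∈ E
          · rw [if_pos hEv, if_pos hEv]
            exact mul_le_mul_of_nonneg_left (hhl v u hEv)
              (mul_nonneg (hp v).le (hq0 v u))
          · simp [hEv]
  -- objective inequality
  have hJnn : ∀ v u w, 0 ≤ jointD E p pw q v u w :=
    jointD_nonneg E p (fun v => (hp v).le) pw hpw0 q hq0
  have hUWnn : ∀ u w, 0 ≤ margUW E p pw q u w :=
    fun u w => Finset.sum_nonneg fun v _ => hJnn v u w
  have hWnn : ∀ w, 0 ≤ margW E p pw q w :=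
    fun w => Finset.sum_nonneg fun u _ => hUWnn u w
  have hq'z : ∀ v u', (v, u') ∉ E' → q' v u' = 0 := fun v u' hh => by
    by_contra hne; exact hh (hq'E v u' hne)
  have hJd : ∀ v u w, jointD E p pw q v u w = p v * q v u * pw v u w := by
    intro v u w
    rw [jointD]
    split_ifs with hEv
    · rfl
    · rw [hqz v u hEv]; ring
  have hJd' : ∀ v u w, jointD E' p pw q' v u w = p v * q' v u * pw v u w := by
    intro v u w
    rw [jointD]
    split_ifs with hEv
    · rfl
    · rw [hq'z v u hEv]; ring
  have hzero : ∀ v w, kV v ≠ kW w → ∀ u, (v, u) ∈ E → pw v u w = 0 := by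
    intro v w hne u hu
    by_contra h0
    exact hne (hsep v w ⟨u, hu, lt_of_le_of_ne (hpw0 v u w) (Ne.symm h0)⟩)
  have hpe : ∀ v w u u', kV v = kW w → (v, u) ∈ E → h (kW w) u = u' →
      pw v u w = pw v u' w := by
    intro v w u u' hk hEv hh
    have hx := hhp v u w hEv hk.symm
    rw [hk, hh] at hx
    exact hx.symm
  -- pointwise contraction identity for the joint distribution
  have hL1 : ∀ v w u', jointD E' p pw q' v u' w
      = ∑ u, if h (kW w) u = u' then jointD E p pw q v u w else 0 := by
    intro v w u'
    rw [hJd']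
    by_cases hk : kV v = kW w
    · have hterm : ∀ u, (if h (kW w) u = u' then jointD E p pw q v u w else 0)
          = p v * pw v u' w *
            (if (v, u) ∈ E ∧ h (kV v) u = u' then q v u else 0) := by
        intro u
        by_cases hEv : (v, u) ∈ E
        · by_cases hh : h (kW w) u = u'
          · rw [if_pos hh, if_pos ⟨hEv, by rw [hk]; exact hh⟩, hJd,
              hpe v w u u' hk hEv hh]
            ring
          · rw [if_neg hh, if_neg (fun hc => hh (by rw [← hk]; exact hc.2))]
            ring
        · have hr : (if (v, u) ∈ E ∧ h (kV v) u = u' then q v u else 0) = 0 :=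
            if_neg (fun hc => hEv hc.1)
          rw [hr, mul_zero]
          split_ifs with hh
          · rw [hJd, hqz v u hEv]; ring
          · rfl
      rw [Finset.sum_congr rfl fun u _ => hterm u, ← Finset.mul_sum, ← hq' v u']
      ring
    · have h1 : pw v u' w * q' v u' = 0 := by
        by_cases hz : q' v u' = 0
        · rw [hz, mul_zero]
        · rw [hzero v w hk u' (hsub (hq'E v u' hz)), zero_mul]
      have h2 : ∀ u, (if h (kW w) u = u' then jointD E p pw q v u w else 0) = 0 := by
        intro u
        split_ifs with hh
        · rw [hJd]
          by_cases hEv : (v, u) ∈ E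
          · rw [hzero v w hk u hEv]; ring
          · rw [hqz v u hEv]; ring
        · rfl
      rw [Finset.sum_eq_zero fun u _ => h2 u, mul_assoc, mul_comm (q' v u'), h1,
        mul_zero]
  have hL2 : ∀ w u', margUW E' p pw q' u' w
      = ∑ u, if h (kW w) u = u' then margUW E p pw q u w else 0 := by
    intro w u'
    calc margUW E' p pw q' u' w
        = ∑ v, ∑ u, if h (kW w) u = u' then jointD E p pw q v u w else 0 :=
          Finset.sum_congr rfl fun v _ => hL1 v w u'
      _ = ∑ u, ∑ v, if h (kW w) u = u' then jointD E p pw q v u w else 0 :=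
          Finset.sum_comm
      _ = ∑ u, if h (kW w) u = u' then margUW E p pw q u w else 0 := by
          refine Finset.sum_congr rfl fun u _ => ?_
          by_cases hh : h (kW w) u = u'
          · rw [if_pos hh, margUW]
            exact Finset.sum_congr rfl fun v _ => if_pos hh
          · rw [if_neg hh]
            exact Finset.sum_eq_zero fun v _ => if_neg hh
  have hL3 : ∀ w, margW E' p pw q' w = margW E p pw q w := by
    intro w
    calc margW E' p pw q' w
        = ∑ u', ∑ u, if h (kW w) u = u' then margUW E p pw q u w else 0 :=
          Finset.sum_congr rfl fun u' _ => hL2 w u'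
      _ = ∑ u, ∑ u', if h (kW w) u = u' then margUW E p pw q u w else 0 :=
          Finset.sum_comm
      _ = margW E p pw q w := by
          refine Finset.sum_congr rfl fun u _ => ?_
          simp
  -- the per-(v,w) inequality
  have hmain : ∀ v w,
      (∑ u', jointD E' p pw q' v u' w *
        Real.log (q' v u' * margW E p pw q w / margUW E' p pw q' u' w))
      ≤ ∑ u, jointD E p pw q v u w *
        Real.log (q v u * margW E p pw q w / margUW E p pw q u w) := by
    intro v w
    rw [← Finset.sum_fiberwise_of_maps_to
      (fun u _ => Finset.mem_univ (h (kW w) u))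
      (fun u => jointD E p pw q v u w *
        Real.log (q v u * margW E p pw q w / margUW E p pw q u w))]
    refine Finset.sum_le_sum fun u' _ => ?_
    set F : Finset U := Finset.univ.filter (fun u => h (kW w) u = u') with hF
    have hJ'eq : jointD E' p pw q' v u' w = ∑ u ∈ F, jointD E p pw q v u w := by
      rw [hL1 v w u']
      exact (Finset.sum_filter _ _).symm
    have hUW'eq : margUW E' p pw q' u' w = ∑ u ∈ F, margUW E p pw q u w := by
      rw [hL2 w u']
      exact (Finset.sum_filter _ _).symm
    by_cases hk : kV v = kW w
    · by_cases hpi : pw v u' w = 0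
      · have hz : ∀ u ∈ F, jointD E p pw q v u w = 0 := by
          intro u hu
          have hh : h (kW w) u = u' := (Finset.mem_filter.1 hu).2
          rw [hJd]
          by_cases hEv : (v, u) ∈ E
          · rw [hpe v w u u' hk hEv hh, hpi]; ring
          · rw [hqz v u hEv]; ring
        rw [hJ'eq, Finset.sum_eq_zero hz, zero_mul]
        exact le_of_eq (Finset.sum_eq_zero fun u hu => by rw [hz u hu, zero_mul]).symm
      · have hpipos : 0 < pw v u' w := lt_of_le_of_ne (hpw0 v u' w) (Ne.symm hpi)
        have hJfib : ∀ u ∈ F, jointD E p pw q v u w = p v * pw v u' w * q v u := by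
          intro u hu
          have hh : h (kW w) u = u' := (Finset.mem_filter.1 hu).2
          rw [hJd]
          by_cases hEv : (v, u) ∈ E
          · rw [hpe v w u u' hk hEv hh]; ring
          · rw [hqz v u hEv]; ring
        have hq'fib : q' v u' = ∑ u ∈ F, q v u := by
          rw [hq' v u', hF, Finset.sum_filter]
          refine Finset.sum_congr rfl fun u _ => ?_
          by_cases hEv : (v, u) ∈ E
          · simp [hEv, hk]
          · simp [hEv, hqz v u hEv]
        have hLS := log_sum_ineq F (fun u => q v u)
          (fun u => margUW E p pw q u w / margW E p pw q w)
          (fun u _ => hq0 v u)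
          (fun u _ => div_nonneg (hUWnn u w) (hWnn w))
          (by
            intro u hu hne
            have hEv : (v, u) ∈ E := hqE v u hne
            have hqpos : 0 < q v u := lt_of_le_of_ne (hq0 v u) (Ne.symm hne)
            have hh : h (kW w) u = u' := (Finset.mem_filter.1 hu).2
            have hJpos : 0 < jointD E p pw q v u w := by
              rw [hJd, hpe v w u u' hk hEv hh]
              exact mul_pos (mul_pos (hp v) hqpos) hpipos
            have hUWpos : 0 < margUW E p pw q u w :=
              lt_of_lt_of_le hJpos
                (Finset.single_le_sum (fun v' _ => hJnn v' u w) (Finset.mem_univ v))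
            have hWpos : 0 < margW E p pw q w :=
              lt_of_lt_of_le hUWpos
                (Finset.single_le_sum (fun u'' _ => hUWnn u'' w) (Finset.mem_univ u))
            exact (div_pos hUWpos hWpos).ne')
        calc jointD E' p pw q' v u' w *
            Real.log (q' v u' * margW E p pw q w / margUW E' p pw q' u' w)
            = (p v * pw v u' w) * ((∑ u ∈ F, q v u) *
              Real.log ((∑ u ∈ F, q v u) /
                (∑ u ∈ F, margUW E p pw q u w / margW E p pw q w))) := by
              rw [hJ'eq, Finset.sum_congr rfl hJfib, ← Finset.mul_sum, hq'fib,
                hUW'eq]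
              conv_rhs => rw [← Finset.sum_div, div_div_eq_mul_div]
              ring
          _ ≤ (p v * pw v u' w) * (∑ u ∈ F, q v u *
              Real.log (q v u / (margUW E p pw q u w / margW E p pw q w))) :=
              mul_le_mul_of_nonneg_left hLS (mul_nonneg (hp v).le (hpw0 v u' w))
          _ = ∑ u ∈ F, jointD E p pw q v u w *
              Real.log (q v u * margW E p pw q w / margUW E p pw q u w) := by
              rw [Finset.mul_sum]
              refine Finset.sum_congr rfl fun u hu => ?_
              rw [hJfib u hu, div_div_eq_mul_div]
              ring
    · have hz : ∀ u, jointD E p pw q v u w = 0 := by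
        intro u
        rw [hJd]
        by_cases hEv : (v, u) ∈ E
        · rw [hzero v w hk u hEv]; ring
        · rw [hqz v u hEv]; ring
      rw [hJ'eq, Finset.sum_eq_zero fun u _ => hz u, zero_mul]
      exact le_of_eq (Finset.sum_eq_zero fun u hu => by rw [hz u, zero_mul]).symm
  have hObj : Obj E' p pw q' ≤ Obj E p pw q := by
    rw [obj_eq_S E p hp pw hpw0 hpw1 q ⟨hq0, hq1, hqE⟩,
      obj_eq_S E' p hp pw hpw0 (fun v u hu => hpw1 v u (hsub hu)) q' hcd']
    simp only [hL3]
    refine Finset.sum_le_sum fun v _ => ?_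
    calc (∑ u', ∑ w, jointD E' p pw q' v u' w *
          Real.log (q' v u' * margW E p pw q w / margUW E' p pw q' u' w))
        = ∑ w, ∑ u', jointD E' p pw q' v u' w *
          Real.log (q' v u' * margW E p pw q w / margUW E' p pw q' u' w) :=
          Finset.sum_comm
      _ ≤ ∑ w, ∑ u, jointD E p pw q v u w *
          Real.log (q v u * margW E p pw q w / margUW E p pw q u w) :=
          Finset.sum_le_sum fun w _ => hmain v w
      _ = ∑ u, ∑ w, jointD E p pw q v u w *
          Real.log (q v u * margW E p pw q w / margUW E p pw q u w) :=
          Finset.sum_comm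
  exact ⟨hcd', hLoss, hLoss.trans hqL, hObj⟩
end
end

section
/- (Cardinality bound.) For the problem min_{p(u|v)} I(U;V) − I(U;W) subject to E[ℓ(V,U,W)] ≤ L with E = V × U, there exists an optimal conditional distribution p(u|v) whose marginal p(u) is supported on at most |V| + |W| elements of U. -/
open Real
set_option linter.unusedSectionVars false

noncomputable section

variable {V U W : Type*} [Fintype V] [Fintype U] [Fintype W]
  [DecidableEq V] [DecidableEq U]

section MyAux

variable (p : V → ℝ) (pw : V → U → W → ℝ) (lt : V → U → ℝ)

/-- abbreviation: φ(x) = x log x -/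
def phiF (x : ℝ) : ℝ := x * Real.log x

lemma phiF_mul (a b : ℝ) : phiF (a * b) = a * phiF b + b * phiF a := by
  unfold phiF
  rcases eq_or_ne a 0 with h | h
  · simp [h]
  rcases eq_or_ne b 0 with h' | h'
  · simp [h']
  rw [Real.log_mul h h']
  ring

lemma phiF_zero : phiF (0:ℝ) = 0 := by simp [phiF]

lemma margUW_univ (q : V → U → ℝ) (u : U) (w : W) :
    margUW (Finset.univ : Finset (V × U)) p pw q u w = ∑ v, p v * q v u * pw v u w := by
  simp [margUW, jointD]

lemma LossE_univ (q : V → U → ℝ) :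
    LossE (Finset.univ : Finset (V × U)) p lt q = ∑ v, ∑ u, p v * q v u * lt v u := by
  simp [LossE]

/-- The continuous reformulation of the objective. -/
def Ffun (q : V → U → ℝ) : ℝ :=
  (∑ v, ∑ u, p v * phiF (q v u))
  - (∑ u, ∑ w, phiF (margUW (Finset.univ : Finset (V × U)) p pw q u w))
  + ∑ w, phiF (margW (Finset.univ : Finset (V × U)) p pw q w)

lemma sum_w_margUW (hpw1 : ∀ v u, ∑ w, pw v u w = 1) (q : V → U → ℝ) (u : U) :
    ∑ w, margUW (Finset.univ : Finset (V × U)) p pw q u w = margU p q u := by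
  simp only [margUW_univ, margU]
  rw [Finset.sum_comm]
  refine Finset.sum_congr rfl fun v _ => ?_
  rw [← Finset.mul_sum, hpw1]
  ring

lemma margUW_nonneg (hp : ∀ v, 0 < p v) (hpw0 : ∀ v u w, 0 ≤ pw v u w)
    (q : V → U → ℝ) (hq0 : ∀ v u, 0 ≤ q v u) (u : U) (w : W) :
    0 ≤ margUW (Finset.univ : Finset (V × U)) p pw q u w := by
  rw [margUW_univ]
  exact Finset.sum_nonneg fun v _ =>
    mul_nonneg (mul_nonneg (hp v).le (hq0 v u)) (hpw0 v u w)

lemma margUW_le_margU (hp : ∀ v, 0 < p v) (hpw0 : ∀ v u w, 0 ≤ pw v u w)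
    (hpw1 : ∀ v u, ∑ w, pw v u w = 1)
    (q : V → U → ℝ) (hq0 : ∀ v u, 0 ≤ q v u) (u : U) (w : W) :
    margUW (Finset.univ : Finset (V × U)) p pw q u w ≤ margU p q u := by
  rw [margUW_univ, margU]
  refine Finset.sum_le_sum fun v _ => ?_
  have hle : pw v u w ≤ 1 := by
    rw [← hpw1 v u]
    exact Finset.single_le_sum (fun w' _ => hpw0 v u w') (Finset.mem_univ w)
  calc p v * q v u * pw v u w ≤ p v * q v u * 1 :=
        mul_le_mul_of_nonneg_left hle (mul_nonneg (hp v).le (hq0 v u))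
    _ = p v * q v u := by ring

lemma margUW_le_margW (hp : ∀ v, 0 < p v) (hpw0 : ∀ v u w, 0 ≤ pw v u w)
    (q : V → U → ℝ) (hq0 : ∀ v u, 0 ≤ q v u) (u : U) (w : W) :
    margUW (Finset.univ : Finset (V × U)) p pw q u w
      ≤ margW (Finset.univ : Finset (V × U)) p pw q w := by
  unfold margW
  exact Finset.single_le_sum (fun u' _ => margUW_nonneg p pw hp hpw0 q hq0 u' w)
    (Finset.mem_univ u)

lemma Obj_eq_Ffun (hp : ∀ v, 0 < p v) (hpw0 : ∀ v u w, 0 ≤ pw v u w)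
    (hpw1 : ∀ v u, ∑ w, pw v u w = 1)
    (q : V → U → ℝ) (hq0 : ∀ v u, 0 ≤ q v u) :
    Obj (Finset.univ : Finset (V × U)) p pw q = Ffun p pw q := by
  have hm0 : ∀ u, 0 ≤ margU p q u := fun u =>
    Finset.sum_nonneg fun v _ => mul_nonneg (hp v).le (hq0 v u)
  have hmle : ∀ v u, p v * q v u ≤ margU p q u := fun v u =>
    Finset.single_le_sum (f := fun v' => p v' * q v' u)
      (fun v' _ => mul_nonneg (hp v').le (hq0 v' u)) (Finset.mem_univ v)
  have hIUV : IUV p q = (∑ v, ∑ u, p v * phiF (q v u)) - ∑ u, phiF (margU p q u) := by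
    have key : ∀ v u, p v * q v u * Real.log (q v u / margU p q u)
        = p v * phiF (q v u) - p v * q v u * Real.log (margU p q u) := by
      intro v u
      rcases eq_or_ne (q v u) 0 with h | h
      · simp [h, phiF]
      · have hq : 0 < q v u := (hq0 v u).lt_of_ne (Ne.symm h)
        have hmu : 0 < margU p q u := lt_of_lt_of_le (mul_pos (hp v) hq) (hmle v u)
        rw [Real.log_div h hmu.ne']
        unfold phiF; ring
    have : IUV p q = ∑ v, ∑ u,
        (p v * phiF (q v u) - p v * q v u * Real.log (margU p q u)) := by
      unfold IUV
      exact Finset.sum_congr rfl fun v _ => Finset.sum_congr rfl fun u _ => key v u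
    rw [this]
    simp only [Finset.sum_sub_distrib]
    congr 1
    rw [Finset.sum_comm]
    refine Finset.sum_congr rfl fun u _ => ?_
    rw [← Finset.sum_mul]
    rfl
  have hIUW : IUW (Finset.univ : Finset (V × U)) p pw q
      = (∑ u, ∑ w, phiF (margUW (Finset.univ : Finset (V × U)) p pw q u w))
        - (∑ u, phiF (margU p q u))
        - ∑ w, phiF (margW (Finset.univ : Finset (V × U)) p pw q w) := by
    set B := margUW (Finset.univ : Finset (V × U)) p pw q with hB
    set mw := margW (Finset.univ : Finset (V × U)) p pw q with hmw
    have key2 : ∀ u w, B u w * Real.log (B u w / (margU p q u * mw w))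
        = phiF (B u w) - B u w * Real.log (margU p q u) - B u w * Real.log (mw w) := by
      intro u w
      rcases eq_or_ne (B u w) 0 with h | h
      · simp [h, phiF]
      · have hBpos : 0 < B u w := (margUW_nonneg p pw hp hpw0 q hq0 u w).lt_of_ne (Ne.symm h)
        have hu : 0 < margU p q u :=
          lt_of_lt_of_le hBpos (margUW_le_margU p pw hp hpw0 hpw1 q hq0 u w)
        have hw : 0 < mw w := lt_of_lt_of_le hBpos (margUW_le_margW p pw hp hpw0 q hq0 u w)
        rw [Real.log_div h (mul_pos hu hw).ne', Real.log_mul hu.ne' hw.ne']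
        unfold phiF; ring
    have : IUW (Finset.univ : Finset (V × U)) p pw q = ∑ u, ∑ w,
        (phiF (B u w) - B u w * Real.log (margU p q u) - B u w * Real.log (mw w)) := by
      unfold IUW
      exact Finset.sum_congr rfl fun u _ => Finset.sum_congr rfl fun w _ => key2 u w
    rw [this]
    simp only [Finset.sum_sub_distrib]
    congr 1
    · congr 1
      refine Finset.sum_congr rfl fun u _ => ?_
      rw [← Finset.sum_mul, sum_w_margUW p pw hpw1 q u]
      rfl
    · rw [Finset.sum_comm]
      refine Finset.sum_congr rfl fun w _ => ?_
      rw [← Finset.sum_mul]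
      rfl
  unfold Obj Ffun
  rw [hIUV, hIUW]
  ring

lemma Ffun_continuous : Continuous (Ffun p pw : (V → U → ℝ) → ℝ) := by
  have hq : ∀ (v : V) (u : U), Continuous fun q : V → U → ℝ => q v u :=
    fun v u => (continuous_apply u).comp (continuous_apply v)
  have hB : ∀ (u : U) (w : W),
      Continuous fun q : V → U → ℝ => margUW (Finset.univ : Finset (V × U)) p pw q u w := by
    intro u w
    simp only [margUW_univ]
    exact continuous_finset_sum _ fun v _ =>
      (continuous_const.mul (hq v u)).mul continuous_const
  have hW : ∀ w : W,
      Continuous fun q : V → U → ℝ => margW (Finset.univ : Finset (V × U)) p pw q w :=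
    fun w => continuous_finset_sum _ fun u _ => hB u w
  unfold Ffun phiF
  refine Continuous.add (Continuous.sub ?_ ?_) ?_
  · exact continuous_finset_sum _ fun v _ => continuous_finset_sum _ fun u _ =>
      continuous_const.mul (Real.continuous_mul_log.comp (hq v u))
  · exact continuous_finset_sum _ fun u _ => continuous_finset_sum _ fun w _ =>
      Real.continuous_mul_log.comp (hB u w)
  · exact continuous_finset_sum _ fun w _ => Real.continuous_mul_log.comp (hW w)

/-- Existence of a minimizer by compactness. -/
lemma exists_minimizer (hp : ∀ v, 0 < p v) (hpw0 : ∀ v u w, 0 ≤ pw v u w)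
    (hpw1 : ∀ v u, ∑ w, pw v u w = 1) (L : ℝ)
    (hfeas : ∃ q, CondDistOn (Finset.univ : Finset (V × U)) q
      ∧ LossE (Finset.univ : Finset (V × U)) p lt q ≤ L) :
    ∃ q, CondDistOn (Finset.univ : Finset (V × U)) q
      ∧ LossE (Finset.univ : Finset (V × U)) p lt q ≤ L
      ∧ ∀ q', CondDistOn (Finset.univ : Finset (V × U)) q' →
          LossE (Finset.univ : Finset (V × U)) p lt q' ≤ L →
          Obj (Finset.univ : Finset (V × U)) p pw q
            ≤ Obj (Finset.univ : Finset (V × U)) p pw q' := by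
  classical
  set K : Set (V → U → ℝ) := {q | CondDistOn (Finset.univ : Finset (V × U)) q
      ∧ LossE (Finset.univ : Finset (V × U)) p lt q ≤ L} with hK
  have hqc : ∀ (v : V) (u : U), Continuous fun q : V → U → ℝ => q v u :=
    fun v u => (continuous_apply u).comp (continuous_apply v)
  have hKsub : K ⊆ Set.pi Set.univ fun _ : V => Set.pi Set.univ fun _ : U => Set.Icc (0:ℝ) 1 := by
    rintro q ⟨⟨h0, h1, _⟩, _⟩ v _ u _
    refine ⟨h0 v u, ?_⟩
    rw [← h1 v]
    exact Finset.single_le_sum (fun u' _ => h0 v u') (Finset.mem_univ u)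
  have hKclosed : IsClosed K := by
    have e : K = ({q : V → U → ℝ | ∀ v u, 0 ≤ q v u}
        ∩ {q : V → U → ℝ | ∀ v, ∑ u, q v u = 1})
        ∩ {q : V → U → ℝ | LossE (Finset.univ : Finset (V × U)) p lt q ≤ L} := by
      ext q
      simp only [hK, Set.mem_setOf_eq, Set.mem_inter_iff, CondDistOn, Finset.mem_univ,
        imp_true_iff, and_true, true_and]
    rw [e]
    refine IsClosed.inter (IsClosed.inter ?_ ?_) ?_
    · have : {q : V → U → ℝ | ∀ v u, 0 ≤ q v u}
          = ⋂ v, ⋂ u, {q : V → U → ℝ | 0 ≤ q v u} := by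
        ext q; simp
      rw [this]
      exact isClosed_iInter fun v => isClosed_iInter fun u =>
        isClosed_le continuous_const (hqc v u)
    · have : {q : V → U → ℝ | ∀ v, ∑ u, q v u = 1}
          = ⋂ v, {q : V → U → ℝ | ∑ u, q v u = 1} := by
        ext q; simp
      rw [this]
      exact isClosed_iInter fun v =>
        isClosed_eq (continuous_finset_sum _ fun u _ => hqc v u) continuous_const
    · refine isClosed_le ?_ continuous_const
      have : (LossE (Finset.univ : Finset (V × U)) p lt : (V → U → ℝ) → ℝ)
          = fun q => ∑ v, ∑ u, p v * q v u * lt v u := by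
        funext q; exact LossE_univ p lt q
      rw [this]
      exact continuous_finset_sum _ fun v _ => continuous_finset_sum _ fun u _ =>
        (continuous_const.mul (hqc v u)).mul continuous_const
  have hKcompact : IsCompact K :=
    IsCompact.of_isClosed_subset
      (isCompact_univ_pi fun _ => isCompact_univ_pi fun _ => isCompact_Icc) hKclosed hKsub
  have hKne : K.Nonempty := by
    obtain ⟨q, hq1, hq2⟩ := hfeas
    exact ⟨q, hq1, hq2⟩
  have hcont : ContinuousOn (Obj (Finset.univ : Finset (V × U)) p pw) K := by
    refine ContinuousOn.congr (Ffun_continuous p pw).continuousOn ?_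
    intro q hq
    exact Obj_eq_Ffun p pw hp hpw0 hpw1 q hq.1.1
  obtain ⟨q₀, hq₀K, hmin⟩ := hKcompact.exists_isMinOn hKne hcont
  exact ⟨q₀, hq₀K.1, hq₀K.2, fun q' h1 h2 => hmin (by exact ⟨h1, h2⟩)⟩



/-- A linear functional given by coefficients. -/
def lmap {ι : Type*} [Fintype ι] (a : ι → ℝ) : (ι → ℝ) →ₗ[ℝ] ℝ where
  toFun := fun y => ∑ u, y u * a u
  map_add' := fun x y => by simp [add_mul, Finset.sum_add_distrib]
  map_smul' := fun c x => by simp [Finset.mul_sum, mul_assoc]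

/-- The support-reduction step. -/
lemma reduce (hp : ∀ v, 0 < p v) (hpw0 : ∀ v u w, 0 ≤ pw v u w)
    (hpw1 : ∀ v u, ∑ w, pw v u w = 1) (L : ℝ)
    (q : V → U → ℝ) (hq : CondDistOn (Finset.univ : Finset (V × U)) q)
    (hL : LossE (Finset.univ : Finset (V × U)) p lt q ≤ L)
    (hcard : Fintype.card V + Fintype.card W
      < (Finset.univ.filter (fun u => 0 < margU p q u)).card) :
    ∃ q2, CondDistOn (Finset.univ : Finset (V × U)) q2
      ∧ LossE (Finset.univ : Finset (V × U)) p lt q2 ≤ L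
      ∧ Obj (Finset.univ : Finset (V × U)) p pw q2 ≤ Obj (Finset.univ : Finset (V × U)) p pw q
      ∧ (Finset.univ.filter (fun u => 0 < margU p q2 u)).card
        < (Finset.univ.filter (fun u => 0 < margU p q u)).card := by
  classical
  obtain ⟨hq0, hq1, -⟩ := hq
  set S : Finset U := Finset.univ.filter (fun u => 0 < margU p q u) with hS
  have hlam_pos : ∀ u ∈ S, 0 < margU p q u := by
    intro u hu; exact (Finset.mem_filter.mp hu).2
  have hlam_ne : ∀ u ∈ S, margU p q u ≠ 0 := fun u hu => (hlam_pos u hu).ne'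
  -- nonemptiness facts
  have hSne : S.Nonempty := by
    rw [← Finset.card_pos]; omega
  obtain ⟨u₀, hu₀⟩ := hSne
  have hVne : Nonempty V := by
    by_contra h
    have : margU p q u₀ = 0 := by
      simp only [margU]
      rw [Finset.sum_eq_zero]
      intro v _
      exact absurd ⟨v⟩ h
    exact absurd this (hlam_ne u₀ hu₀)
  obtain ⟨v₀⟩ := hVne
  have hWne : Nonempty W := by
    by_contra h
    have := hpw1 v₀ u₀
    rw [Finset.sum_eq_zero (fun w _ => absurd ⟨w⟩ h)] at this
    norm_num at this
  obtain ⟨w₀⟩ := hWne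
  -- off-support vanishing
  have hqoff : ∀ v u, u ∉ S → q v u = 0 := by
    intro v u hu
    have hm0 : margU p q u = 0 := by
      by_contra h
      have : 0 < margU p q u :=
        (Finset.sum_nonneg fun v' _ => mul_nonneg (hp v').le (hq0 v' u)).lt_of_ne (Ne.symm h)
      exact hu (Finset.mem_filter.mpr ⟨Finset.mem_univ u, this⟩)
    have := (Finset.sum_eq_zero_iff_of_nonneg
      (fun v' (_ : v' ∈ Finset.univ) => mul_nonneg (hp v').le (hq0 v' u))).mp hm0 v
      (Finset.mem_univ v)
    exact (mul_eq_zero.mp this).resolve_left (hp v).ne'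
  -- shorthand
  set B : U → W → ℝ := fun u w => margUW (Finset.univ : Finset (V × U)) p pw q u w with hBdef
  set c : U → ℝ := fun u => ∑ v, p v * q v u * lt v u with hcdef
  have hBoff : ∀ u w, u ∉ S → B u w = 0 := by
    intro u w hu
    rw [hBdef]; simp only [margUW_univ]
    exact Finset.sum_eq_zero fun v _ => by rw [hqoff v u hu]; ring
  have hcoff : ∀ u, u ∉ S → c u = 0 := by
    intro u hu
    rw [hcdef]
    exact Finset.sum_eq_zero fun v _ => by rw [hqoff v u hu]; ring
  have hsumB : ∀ u, ∑ w, B u w = margU p q u := fun u => sum_w_margUW p pw hpw1 q u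
  -- the kernel element
  have hker : ∃ z : U → ℝ,
      (∀ v, ∑ u ∈ S, z u * (p v * q v u / margU p q u) = 0)
      ∧ (∀ w, w ≠ w₀ → ∑ u ∈ S, z u * (B u w / margU p q u) = 0)
      ∧ (∑ u ∈ S, z u * (c u / margU p q u) = 0)
      ∧ (∃ u ∈ S, z u ≠ 0) := by
    set Φ : (↥S → ℝ) →ₗ[ℝ] ((V → ℝ) × (({w : W // w ≠ w₀} → ℝ) × ℝ)) :=
      (LinearMap.pi fun v => lmap fun u : ↥S => p v * q v (u : U) / margU p q (u : U)).prod
      ((LinearMap.pi fun w : {w : W // w ≠ w₀} =>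
          lmap fun u : ↥S => B (u : U) (w : W) / margU p q (u : U)).prod
        (lmap fun u : ↥S => c (u : U) / margU p q (u : U))) with hΦ
    have hdim : Module.finrank ℝ ((V → ℝ) × (({w : W // w ≠ w₀} → ℝ) × ℝ))
        < Module.finrank ℝ (↥S → ℝ) := by
      rw [Module.finrank_prod, Module.finrank_prod, Module.finrank_pi, Module.finrank_pi,
        Module.finrank_pi, Module.finrank_self]
      have h1 : Fintype.card {w : W // w ≠ w₀} = Fintype.card W - 1 := by
        rw [Fintype.card_subtype_compl (p := fun w => w = w₀), Fintype.card_subtype_eq]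
      have h2 : 1 ≤ Fintype.card W := @Fintype.card_pos _ _ ⟨w₀⟩
      have h3 : Fintype.card (↥S) = S.card := Fintype.card_coe S
      omega
    have hninj : ¬ Function.Injective Φ := by
      intro hinj
      exact absurd (LinearMap.finrank_le_finrank_of_injective hinj) (not_le.mpr hdim)
    rw [← LinearMap.ker_eq_bot] at hninj
    obtain ⟨y, hyker, hyne⟩ := Submodule.exists_mem_ne_zero_of_ne_bot hninj
    refine ⟨fun u => if h : u ∈ S then y ⟨u, h⟩ else 0, ?_, ?_, ?_, ?_⟩
    · intro v
      have := congrFun (congrArg Prod.fst hyker) v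
      simp only [hΦ, LinearMap.prod_apply, LinearMap.pi_apply, lmap, Pi.zero_apply,
        Prod.fst_zero, Prod.snd_zero, LinearMap.coe_mk, AddHom.coe_mk, Pi.prod] at this
      rw [← Finset.sum_coe_sort]
      exact (Finset.sum_congr rfl fun u _ => by simp [dif_pos u.2]).trans this
    · intro w hw
      have := congrFun (congrArg (fun x => x.2.1) hyker) ⟨w, hw⟩
      simp only [hΦ, LinearMap.prod_apply, LinearMap.pi_apply, lmap, Pi.zero_apply,
        Prod.fst_zero, Prod.snd_zero, LinearMap.coe_mk, AddHom.coe_mk, Pi.prod] at this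
      rw [← Finset.sum_coe_sort]
      exact (Finset.sum_congr rfl fun u _ => by simp [dif_pos u.2]).trans this
    · have := congrArg (fun x => x.2.2) hyker
      simp only [hΦ, LinearMap.prod_apply, lmap, Pi.prod, Prod.fst_zero, Prod.snd_zero,
        LinearMap.coe_mk, AddHom.coe_mk] at this
      rw [← Finset.sum_coe_sort]
      exact (Finset.sum_congr rfl fun u _ => by simp [dif_pos u.2]).trans this
    · have : ∃ u : ↥S, y u ≠ 0 := by
        by_contra h
        push_neg at h
        exact hyne (funext fun u => h u)
      obtain ⟨u, hu⟩ := this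
      exact ⟨u, u.2, by simpa [dif_pos u.2] using hu⟩
  -- derived facts for any kernel vector
  have hsum0 : ∀ z' : U → ℝ, (∀ v, ∑ u ∈ S, z' u * (p v * q v u / margU p q u) = 0) →
      ∑ u ∈ S, z' u = 0 := by
    intro z' h
    have h1 : ∑ u ∈ S, z' u = ∑ u ∈ S, ∑ v, z' u * (p v * q v u / margU p q u) := by
      refine Finset.sum_congr rfl fun u hu => ?_
      rw [← Finset.mul_sum]
      have h2 : ∑ v, p v * q v u / margU p q u = 1 := by
        rw [← Finset.sum_div]
        exact div_self (hlam_ne u hu)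
      rw [h2, mul_one]
    rw [h1, Finset.sum_comm]
    exact Finset.sum_eq_zero fun v _ => h v
  have hzwAll : ∀ z' : U → ℝ, (∀ v, ∑ u ∈ S, z' u * (p v * q v u / margU p q u) = 0) →
      (∀ w, w ≠ w₀ → ∑ u ∈ S, z' u * (B u w / margU p q u) = 0) →
      ∀ w, ∑ u ∈ S, z' u * (B u w / margU p q u) = 0 := by
    intro z' hv' hw' w
    rcases eq_or_ne w w₀ with rfl | hne
    · have key : ∀ u ∈ S, z' u * (B u w / margU p q u)
          = z' u - ∑ w' ∈ Finset.univ.erase w, z' u * (B u w' / margU p q u) := by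
        intro u hu
        have hBw : B u w = margU p q u - ∑ w' ∈ Finset.univ.erase w, B u w' := by
          have h3 := hsumB u
          rw [← Finset.add_sum_erase _ _ (Finset.mem_univ w)] at h3
          linarith
        rw [hBw, sub_div, div_self (hlam_ne u hu), Finset.sum_div, mul_sub, mul_one,
          Finset.mul_sum]
      rw [Finset.sum_congr rfl key, Finset.sum_sub_distrib, hsum0 z' hv', Finset.sum_comm]
      rw [Finset.sum_eq_zero fun w' hw'' => hw' w' (Finset.ne_of_mem_erase hw'')]
      norm_num
    · exact hw' w hne
  set e : U → ℝ := fun u => (∑ v, p v * phiF (q v u)) - ∑ w, phiF (B u w) with hedef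
  -- sign-adjusted kernel vector
  have hmain : ∃ z : U → ℝ,
      (∀ v, ∑ u ∈ S, z u * (p v * q v u / margU p q u) = 0)
      ∧ (∀ w, ∑ u ∈ S, z u * (B u w / margU p q u) = 0)
      ∧ (∑ u ∈ S, z u * (c u / margU p q u) = 0)
      ∧ (∃ u ∈ S, z u ≠ 0) ∧ (∑ u ∈ S, z u = 0)
      ∧ ∑ u ∈ S, z u * (e u / margU p q u) ≤ 0 := by
    obtain ⟨z, hzv, hzw, hzc, hzne⟩ := hker
    have hzwA := hzwAll z hzv hzw
    have hz0 := hsum0 z hzv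
    rcases le_total (∑ u ∈ S, z u * (e u / margU p q u)) 0 with hD | hD
    · exact ⟨z, hzv, hzwA, hzc, hzne, hz0, hD⟩
    · refine ⟨-z, fun v => ?_, fun w => ?_, ?_, ?_, ?_, ?_⟩
      · simp only [Pi.neg_apply, neg_mul, Finset.sum_neg_distrib, hzv v, neg_zero]
      · simp only [Pi.neg_apply, neg_mul, Finset.sum_neg_distrib, hzwA w, neg_zero]
      · simp only [Pi.neg_apply, neg_mul, Finset.sum_neg_distrib, hzc, neg_zero]
      · obtain ⟨u, hu, hne⟩ := hzne
        exact ⟨u, hu, by simpa using hne⟩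
      · simp only [Pi.neg_apply, Finset.sum_neg_distrib, hz0, neg_zero]
      · simp only [Pi.neg_apply, neg_mul, Finset.sum_neg_distrib]
        linarith
  obtain ⟨z, hzv, hzw, hzc, hzne, hz0, hD⟩ := hmain
  -- a strictly negative coordinate
  have hTne : (S.filter fun u => z u < 0).Nonempty := by
    rw [Finset.filter_nonempty_iff]
    by_contra h
    push_neg at h
    have hzz := (Finset.sum_eq_zero_iff_of_nonneg fun u hu => h u hu).mp hz0
    obtain ⟨u, hu, hne⟩ := hzne
    exact hne (hzz u hu)
  obtain ⟨us, hus, hminT⟩ := Finset.exists_min_image (S.filter fun u => z u < 0)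
    (fun u => margU p q u / (-z u)) hTne
  have husS : us ∈ S := (Finset.mem_filter.mp hus).1
  have huz : z us < 0 := (Finset.mem_filter.mp hus).2
  set t : ℝ := margU p q us / (-z us) with htdef
  have htpos : 0 < t := div_pos (hlam_pos us husS) (neg_pos.mpr huz)
  -- the scaling factors
  set g : U → ℝ := fun u => if u ∈ S then (margU p q u + t * z u) / margU p q u else 0
    with hgdef
  have hmu : ∀ u ∈ S, 0 ≤ margU p q u + t * z u := by
    intro u hu
    rcases le_or_gt 0 (z u) with h | h
    · have := mul_nonneg htpos.le h
      linarith [hlam_pos u hu]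
    · have hm := hminT u (Finset.mem_filter.mpr ⟨hu, h⟩)
      have h2 : t * -z u ≤ margU p q u := (le_div_iff₀ (neg_pos.mpr h)).mp hm
      linarith
  have hg0 : ∀ u, 0 ≤ g u := by
    intro u
    rw [hgdef]
    by_cases hu : u ∈ S
    · simp only [hu, if_true]
      exact div_nonneg (hmu u hu) (hlam_pos u hu).le
    · simp only [hu, if_false]
      exact le_refl 0
  have hgoff : ∀ u, u ∉ S → g u = 0 := by
    intro u hu; rw [hgdef]; simp only [hu, if_false]
  have hgus : g us = 0 := by
    rw [hgdef]
    simp only [husS, if_true]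
    have hzne' : z us ≠ 0 := ne_of_lt huz
    have h3 : margU p q us + t * z us = 0 := by
      rw [htdef, div_neg, neg_mul, div_mul_cancel₀ _ hzne']
      ring
    rw [h3, zero_div]
  set q2 : V → U → ℝ := fun v u => g u * q v u with hq2def
  have hq20 : ∀ v u, 0 ≤ q2 v u := fun v u => mul_nonneg (hg0 u) (hq0 v u)
  -- master summation lemma
  have hkey : ∀ f : U → ℝ, (∑ u ∈ S, z u * (f u / margU p q u) = 0) →
      (∀ u, u ∉ S → f u = 0) → ∑ u, g u * f u = ∑ u, f u := by
    intro f hker' hoff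
    rw [← Finset.sum_subset (Finset.subset_univ S)
        (fun u _ hu => by rw [hoff u hu, mul_zero]),
      ← Finset.sum_subset (Finset.subset_univ S) (fun u _ hu => hoff u hu)]
    have expand : ∀ u ∈ S, g u * f u = f u + t * (z u * (f u / margU p q u)) := by
      intro u hu
      have hm := hlam_ne u hu
      rw [hgdef]
      simp only [hu, if_true]
      field_simp
    rw [Finset.sum_congr rfl expand, Finset.sum_add_distrib, ← Finset.mul_sum, hker',
      mul_zero, add_zero]
  -- row sums
  have hrow : ∀ v, ∑ u, g u * q v u = 1 := by
    intro v
    have h := hkey (fun u => p v * q v u) (hzv v)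
      (fun u hu => by show p v * q v u = 0; rw [hqoff v u hu, mul_zero])
    have h2 : ∑ u, g u * (p v * q v u) = p v * ∑ u, g u * q v u := by
      rw [Finset.mul_sum]
      exact Finset.sum_congr rfl fun u _ => by ring
    have h3 : ∑ u, p v * q v u = p v := by rw [← Finset.mul_sum, hq1 v, mul_one]
    rw [h2, h3] at h
    exact mul_left_cancel₀ (hp v).ne' (h.trans (mul_one (p v)).symm)
  have hq2cond : CondDistOn (Finset.univ : Finset (V × U)) q2 :=
    ⟨hq20, fun v => hrow v, fun v u _ => Finset.mem_univ _⟩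
  -- loss
  have hloss2 : LossE (Finset.univ : Finset (V × U)) p lt q2
      = LossE (Finset.univ : Finset (V × U)) p lt q := by
    rw [LossE_univ, LossE_univ, Finset.sum_comm, Finset.sum_comm (s := Finset.univ)
      (t := Finset.univ) (f := fun v u => p v * q v u * lt v u)]
    have h1 : ∀ u : U, ∑ v, p v * q2 v u * lt v u = g u * c u := by
      intro u
      rw [hcdef, Finset.mul_sum]
      exact Finset.sum_congr rfl fun v _ => by rw [hq2def]; ring
    rw [Finset.sum_congr rfl fun u _ => h1 u]
    exact hkey c hzc hcoff
  -- margUW and margW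
  have hB2 : ∀ u w, margUW (Finset.univ : Finset (V × U)) p pw q2 u w = g u * B u w := by
    intro u w
    rw [margUW_univ, hBdef]
    simp only [margUW_univ]
    rw [Finset.mul_sum]
    exact Finset.sum_congr rfl fun v _ => by rw [hq2def]; ring
  have hW2 : ∀ w, margW (Finset.univ : Finset (V × U)) p pw q2 w
      = margW (Finset.univ : Finset (V × U)) p pw q w := by
    intro w
    unfold margW
    rw [Finset.sum_congr rfl fun u _ => hB2 u w]
    exact hkey (fun u => B u w) (hzw w) (fun u hu => hBoff u w hu)
  -- margU of q2
  have hmargU2 : ∀ u, margU p q2 u = g u * margU p q u := by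
    intro u
    unfold margU
    rw [Finset.mul_sum]
    exact Finset.sum_congr rfl fun v _ => by rw [hq2def]; ring
  -- support decreases
  have hSnew : (Finset.univ.filter fun u => 0 < margU p q2 u) ⊆ S.erase us := by
    intro u hu
    have hpos := (Finset.mem_filter.mp hu).2
    rw [hmargU2 u] at hpos
    have huS : u ∈ S := by
      by_contra h
      rw [hgoff u h, zero_mul] at hpos
      exact lt_irrefl _ hpos
    refine Finset.mem_erase.mpr ⟨?_, huS⟩
    intro heq
    rw [heq, hgus, zero_mul] at hpos
    exact lt_irrefl _ hpos
  have hcard2 : (Finset.univ.filter fun u => 0 < margU p q2 u).card < S.card :=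
    lt_of_le_of_lt (Finset.card_le_card hSnew) (Finset.card_erase_lt_of_mem husS)
  -- objective decreases
  have hobj : Obj (Finset.univ : Finset (V × U)) p pw q2
      ≤ Obj (Finset.univ : Finset (V × U)) p pw q := by
    rw [Obj_eq_Ffun p pw hp hpw0 hpw1 q2 hq20, Obj_eq_Ffun p pw hp hpw0 hpw1 q hq0]
    set A : U → ℝ := fun u => ∑ v, p v * phiF (q v u) with hAdef
    set C : U → ℝ := fun u => ∑ w, phiF (B u w) with hCdef
    have hA2 : ∑ v, ∑ u, p v * phiF (q2 v u)
        = ∑ u ∈ S, (g u * A u + phiF (g u) * margU p q u) := by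
      rw [Finset.sum_comm, ← Finset.sum_subset (Finset.subset_univ S) (fun u _ hu =>
        Finset.sum_eq_zero fun v _ => by
          rw [hq2def]
          simp only [hqoff v u hu, mul_zero, phiF_zero])]
      refine Finset.sum_congr rfl fun u hu => ?_
      have h1 : ∀ v, p v * phiF (q2 v u)
          = g u * (p v * phiF (q v u)) + phiF (g u) * (p v * q v u) := by
        intro v
        rw [hq2def]
        simp only []
        rw [phiF_mul]
        ring
      rw [Finset.sum_congr rfl fun v _ => h1 v, Finset.sum_add_distrib, ← Finset.mul_sum,
        ← Finset.mul_sum, hAdef]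
      rfl
    have hA1 : ∑ v, ∑ u, p v * phiF (q v u) = ∑ u ∈ S, A u := by
      rw [Finset.sum_comm, ← Finset.sum_subset (Finset.subset_univ S) (fun u _ hu =>
        Finset.sum_eq_zero fun v _ => by simp only [hqoff v u hu, phiF_zero, mul_zero])]
    have hC2 : ∑ u, ∑ w, phiF (margUW (Finset.univ : Finset (V × U)) p pw q2 u w)
        = ∑ u ∈ S, (g u * C u + phiF (g u) * margU p q u) := by
      rw [← Finset.sum_subset (Finset.subset_univ S) (fun u _ hu =>
        Finset.sum_eq_zero fun w _ => by
          rw [hB2 u w, hgoff u hu, zero_mul, phiF_zero])]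
      refine Finset.sum_congr rfl fun u hu => ?_
      have h1 : ∀ w, phiF (margUW (Finset.univ : Finset (V × U)) p pw q2 u w)
          = g u * phiF (B u w) + phiF (g u) * B u w := by
        intro w
        rw [hB2 u w, phiF_mul]
        ring
      rw [Finset.sum_congr rfl fun w _ => h1 w, Finset.sum_add_distrib, ← Finset.mul_sum,
        ← Finset.mul_sum, hCdef, hsumB u]
    have hC1 : ∑ u, ∑ w, phiF (margUW (Finset.univ : Finset (V × U)) p pw q u w)
        = ∑ u ∈ S, C u := by
      rw [← Finset.sum_subset (Finset.subset_univ S) (fun u _ hu =>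
        Finset.sum_eq_zero fun w _ => by
          have : margUW (Finset.univ : Finset (V × U)) p pw q u w = B u w := rfl
          rw [this, hBoff u w hu, phiF_zero])]
    have hWsum : ∑ w, phiF (margW (Finset.univ : Finset (V × U)) p pw q2 w)
        = ∑ w, phiF (margW (Finset.univ : Finset (V × U)) p pw q w) :=
      Finset.sum_congr rfl fun w _ => by rw [hW2 w]
    have hdiff : Ffun p pw q2 - Ffun p pw q = ∑ u ∈ S, (g u - 1) * e u := by
      unfold Ffun
      rw [hA2, hA1, hC2, hC1, hWsum]
      have h1 : ∑ u ∈ S, ((g u * A u + phiF (g u) * margU p q u)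
            - (g u * C u + phiF (g u) * margU p q u) - (A u - C u))
          = ∑ u ∈ S, (g u - 1) * e u :=
        Finset.sum_congr rfl fun u hu => by
          have he : e u = A u - C u := rfl
          rw [he]; ring
      have h2 : ∑ u ∈ S, ((g u * A u + phiF (g u) * margU p q u)
            - (g u * C u + phiF (g u) * margU p q u) - (A u - C u))
          = (∑ u ∈ S, (g u * A u + phiF (g u) * margU p q u))
            - (∑ u ∈ S, (g u * C u + phiF (g u) * margU p q u))
            - ((∑ u ∈ S, A u) - ∑ u ∈ S, C u) := by
        rw [Finset.sum_sub_distrib, Finset.sum_sub_distrib, Finset.sum_sub_distrib]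
      linarith [h1, h2]
    have hterm : ∀ u ∈ S, (g u - 1) * e u = t * (z u * (e u / margU p q u)) := by
      intro u hu
      have hm := hlam_ne u hu
      rw [hgdef]
      simp only [hu, if_true]
      field_simp
      ring
    have hfin : Ffun p pw q2 - Ffun p pw q ≤ 0 := by
      rw [hdiff, Finset.sum_congr rfl hterm, ← Finset.mul_sum]
      nlinarith
    linarith
  exact ⟨q2, hq2cond, by rw [hloss2]; exact hL, hobj, lt_of_lt_of_le hcard2 (le_of_eq rfl)⟩

lemma shrink (hp : ∀ v, 0 < p v) (hpw0 : ∀ v u w, 0 ≤ pw v u w)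
    (hpw1 : ∀ v u, ∑ w, pw v u w = 1) (L : ℝ) :
    ∀ n (q : V → U → ℝ), CondDistOn (Finset.univ : Finset (V × U)) q →
      LossE (Finset.univ : Finset (V × U)) p lt q ≤ L →
      (Finset.univ.filter (fun u => 0 < margU p q u)).card ≤ n →
      ∃ q', CondDistOn (Finset.univ : Finset (V × U)) q'
        ∧ LossE (Finset.univ : Finset (V × U)) p lt q' ≤ L
        ∧ Obj (Finset.univ : Finset (V × U)) p pw q'
            ≤ Obj (Finset.univ : Finset (V × U)) p pw q
        ∧ (Finset.univ.filter (fun u => 0 < margU p q' u)).card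
            ≤ Fintype.card V + Fintype.card W := by
  intro n
  induction n with
  | zero =>
    intro q h1 h2 h3
    exact ⟨q, h1, h2, le_refl _, by omega⟩
  | succ n ih =>
    intro q h1 h2 h3
    by_cases h : (Finset.univ.filter (fun u => 0 < margU p q u)).card
        ≤ Fintype.card V + Fintype.card W
    · exact ⟨q, h1, h2, le_refl _, h⟩
    · push_neg at h
      obtain ⟨q2, hq2c, hq2L, hq2O, hq2card⟩ := reduce p pw lt hp hpw0 hpw1 L q h1 h2 h
      obtain ⟨q', a, b, cO, d⟩ := ih q2 hq2c hq2L (by omega)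
      exact ⟨q', a, b, le_trans cO hq2O, d⟩

end MyAux

/-- cardinality bound — there exists an optimal conditional distribution
whose `U`-marginal is supported on at most `|V| + |W|` elements. -/
theorem cardinality_bound
    (p : V → ℝ) (hp : ∀ v, 0 < p v) (hp1 : ∑ v, p v = 1)
    (pw : V → U → W → ℝ) (hpw0 : ∀ v u w, 0 ≤ pw v u w)
    (hpw1 : ∀ v u, ∑ w, pw v u w = 1)
    (lt : V → U → ℝ) (hlt : ∀ v u, 0 ≤ lt v u) (L : ℝ)
    (hfeas : ∃ q, CondDistOn (Finset.univ : Finset (V × U)) q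
      ∧ LossE (Finset.univ : Finset (V × U)) p lt q ≤ L) :
    ∃ q, CondDistOn (Finset.univ : Finset (V × U)) q
      ∧ LossE (Finset.univ : Finset (V × U)) p lt q ≤ L
      ∧ (∀ q', CondDistOn (Finset.univ : Finset (V × U)) q' →
          LossE (Finset.univ : Finset (V × U)) p lt q' ≤ L →
          Obj (Finset.univ : Finset (V × U)) p pw q
            ≤ Obj (Finset.univ : Finset (V × U)) p pw q')
      ∧ (Finset.univ.filter (fun u => 0 < margU p q u)).card
          ≤ Fintype.card V + Fintype.card W := by
  obtain ⟨q₀, h1, h2, hmin⟩ := exists_minimizer p pw lt hp hpw0 hpw1 L hfeas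
  obtain ⟨q', a, b, c, d⟩ := shrink p pw lt hp hpw0 hpw1 L
    (Finset.univ.filter (fun u => 0 < margU p q₀ u)).card q₀ h1 h2 (le_refl _)
  exact ⟨q', a, b, fun q'' hc hl => le_trans c (hmin q'' hc hl), d⟩
end
end
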